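/- Let D₁ and D₂ be directed acyclic graphs with common vertex set V_com = V(D₁) ∩ V(D₂), and let V₁, V₂ satisfy V_com ⊆ V₁ ⊆ V(D₁) and V_com ⊆ V₂ ⊆ V(D₂). If the reachability relation Con(V₁ ∪ V₂, D₁ ∪ D₂) is irreflexive, then the union D₁ ∪ D₂ is a directed acyclic graph. -/

import Mathlib

/-- `ConR V' A` : reachability relation (by nonempty directed paths, i.e. the
transitive closure of the arc relation) restricted to the vertex set `V'`. -/
def ConR {α : Type*} (V' : Set α) (A : α → α → Prop) : α → α → Prop :=
  fun x y => x ∈ V' ∧ y ∈ V' ∧ Relation.TransGen A x y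

theorem stmt2 {α : Type*} (VD1 VD2 V1 V2 : Set α) (A1 A2 : α → α → Prop)
    (hA1 : ∀ x y, A1 x y → x ∈ VD1 ∧ y ∈ VD1)
    (hA2 : ∀ x y, A2 x y → x ∈ VD2 ∧ y ∈ VD2)
    (hc1 : VD1 ∩ VD2 ⊆ V1) (h1 : V1 ⊆ VD1)
    (hc2 : VD1 ∩ VD2 ⊆ V2) (h2 : V2 ⊆ VD2)
    (hd1 : Irreflexive (Relation.TransGen A1))
    (hd2 : Irreflexive (Relation.TransGen A2))
    (hirr : Irreflexive (ConR (V1 ∪ V2) (fun x y => A1 x y ∨ A2 x y))) :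
    Irreflexive (Relation.TransGen (fun x y => A1 x y ∨ A2 x y)) := by
  set R : α → α → Prop := fun x y => A1 x y ∨ A2 x y with hR
  have mem1 : ∀ {a b}, Relation.TransGen A1 a b → b ∈ VD1 := by
    intro a b h
    induction h with
    | single h => exact (hA1 _ _ h).2
    | tail _ h _ => exact (hA1 _ _ h).2
  have mem2 : ∀ {a b}, Relation.TransGen A2 a b → b ∈ VD2 := by
    intro a b h
    induction h with
    | single h => exact (hA2 _ _ h).2
    | tail _ h _ => exact (hA2 _ _ h).2
  have mono1 : ∀ {a b}, Relation.TransGen A1 a b → Relation.TransGen R a b :=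
    fun h => Relation.TransGen.mono (p := R) (fun _ _ h => Or.inl h) _ _ h
  have mono2 : ∀ {a b}, Relation.TransGen A2 a b → Relation.TransGen R a b :=
    fun h => Relation.TransGen.mono (p := R) (fun _ _ h => Or.inr h) _ _ h
  have key : ∀ {a b}, Relation.TransGen R a b →
      Relation.TransGen A1 a b ∨ Relation.TransGen A2 a b ∨
        ∃ v, v ∈ VD1 ∩ VD2 ∧ Relation.TransGen R a v ∧ Relation.TransGen R v b := by
    intro a b h
    induction h with
    | single h =>
      rcases h with h | h
      · exact Or.inl (Relation.TransGen.single h)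
      · exact Or.inr (Or.inl (Relation.TransGen.single h))
    | @tail b c hab hbc ih =>
      rcases ih with ih | ih | ⟨v, hv, hav, hvb⟩
      · rcases hbc with h | h
        · exact Or.inl (ih.tail h)
        · exact Or.inr (Or.inr ⟨b, ⟨mem1 ih, (hA2 _ _ h).1⟩, mono1 ih,
            Relation.TransGen.single (Or.inr h)⟩)
      · rcases hbc with h | h
        · exact Or.inr (Or.inr ⟨b, ⟨(hA1 _ _ h).1, mem2 ih⟩, mono2 ih,
            Relation.TransGen.single (Or.inl h)⟩)
        · exact Or.inr (Or.inl (ih.tail h))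
      · exact Or.inr (Or.inr ⟨v, hv, hav, hvb.tail hbc⟩)
  intro x hx
  rcases key hx with h | h | ⟨v, hv, hxv, hvx⟩
  · exact hd1 x h
  · exact hd2 x h
  · exact hirr v ⟨Or.inl (hc1 hv), Or.inl (hc1 hv), hvx.trans hxv⟩
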